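/- For any ε > 0 and the square R with boundary data m± on the parabola m₂ = m₁²/2 with jump normal ν parallel to m⁺ − m⁻, the infimum of E_ε over the admissible class A_R is bounded below by |(Σ(m⁺) − Σ(m⁻))·ν|. -/

import Mathlib

open MeasureTheory

noncomputable def px (f : ℝ × ℝ → ℝ) (p : ℝ × ℝ) : ℝ :=
  deriv (fun s => f (s, p.2)) p.1

noncomputable def pz (f : ℝ × ℝ → ℝ) (p : ℝ × ℝ) : ℝ :=
  deriv (fun t => f (p.1, t)) p.2

noncomputable def rotL (a b : ℝ) : (ℝ × ℝ) →ₗ[ℝ] (ℝ × ℝ) :=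
{ toFun := fun q => (a * q.1 - b * q.2, b * q.1 + a * q.2)
  map_add' := by intros; simp [Prod.ext_iff]; constructor <;> ring
  map_smul' := by intros; simp [Prod.ext_iff, smul_eq_mul]; constructor <;> ring }

theorem rotL_det (a b : ℝ) (h : a^2 + b^2 = 1) : LinearMap.det (rotL a b) = 1 := by
  rw [← LinearMap.det_toMatrix (Module.Basis.finTwoProd ℝ)]
  rw [Matrix.det_fin_two]
  simp [LinearMap.toMatrix_apply, rotL, Module.Basis.coe_finTwoProd_repr, Module.Basis.finTwoProd_zero,
    Module.Basis.finTwoProd_one]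
  nlinarith [h]

theorem rotL_cont (a b : ℝ) : Continuous (rotL a b) := by
  simp only [rotL, LinearMap.coe_mk, AddHom.coe_mk]
  fun_prop

theorem rotL_mp (a b : ℝ) (h : a^2+b^2=1) : MeasurePreserving (rotL a b) volume volume := by
  have hd : LinearMap.det (rotL a b) ≠ 0 := by rw [rotL_det a b h]; norm_num
  refine ⟨(rotL_cont a b).measurable, ?_⟩
  rw [Measure.map_linearMap_addHaar_eq_smul_addHaar volume hd, rotL_det a b h]
  simp

noncomputable def rotE (a b : ℝ) (h : a^2 + b^2 = 1) : (ℝ × ℝ) ≃ₗ[ℝ] (ℝ × ℝ) :=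
  LinearEquiv.ofLinear (rotL a b) (rotL a (-b))
    (by ext q <;> simp [rotL] <;> nlinarith [h])
    (by ext q <;> simp [rotL] <;> nlinarith [h])

theorem half_bound (ε a b : ℝ) (hε : 0 < ε) : |b * a| ≤ 1/2 * (ε⁻¹ * a^2 + ε * b^2) := by
  rw [abs_mul]
  have key : 2 * (ε * (|b| * |a|)) ≤ a ^ 2 + ε ^ 2 * b ^ 2 := by
    nlinarith [sq_nonneg (|a| - ε * |b|), sq_abs a, sq_abs b]
  have h3 : ε * (ε⁻¹ * a ^ 2 + ε * b ^ 2) = a ^ 2 + ε ^ 2 * b ^ 2 := by field_simp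
  nlinarith [key, h3, hε]

theorem rotL_emb (a b : ℝ) (h : a^2 + b^2 = 1) :
    MeasurableEmbedding (rotL a b) := by
  have : Continuous (rotE a b h).symm := by
    have : ((rotE a b h).symm : ℝ × ℝ → ℝ × ℝ) = rotL a (-b) := rfl
    rw [this]; exact rotL_cont a (-b)
  exact (Homeomorph.mk (rotE a b h).toEquiv (rotL_cont a b) this).measurableEmbedding

set_option maxHeartbeats 1000000 in
theorem stmt_19 (mp1 mp2 mm1 mm2 p1 p2 n1 n2 ε : ℝ) (hε : 0 < ε)
    (hparp : mp2 = mp1 ^ 2 / 2) (hparm : mm2 = mm1 ^ 2 / 2)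
    (hne : (mp1, mp2) ≠ (mm1, mm2))
    (hp1 : p1 = mp1 - mm1) (hp2 : p2 = mp2 - mm2)
    (hn1 : n1 = p1 / Real.sqrt (p1 ^ 2 + p2 ^ 2))
    (hn2 : n2 = p2 / Real.sqrt (p1 ^ 2 + p2 ^ 2))
    (u : ℝ × ℝ → ℝ) (hu : ContDiff ℝ 2 u)
    (hbcp : ∀ q : ℝ × ℝ, q.1 * n1 + q.2 * n2 = 1 / 2 →
      px u q = mp1 ∧ pz u q = mp2)
    (hbcm : ∀ q : ℝ × ℝ, q.1 * n1 + q.2 * n2 = -(1 / 2) →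
      px u q = mm1 ∧ pz u q = mm2)
    (hper : ∀ q : ℝ × ℝ,
      px u (q.1 - n2, q.2 + n1) = px u q ∧ pz u (q.1 - n2, q.2 + n1) = pz u q) :
    |((mp1 * mp2 - mp1 ^ 3 / 6) - (mm1 * mm2 - mm1 ^ 3 / 6)) * n1
        + ((-(mp1 ^ 2) / 2) - (-(mm1 ^ 2) / 2)) * n2|
      ≤ (1 / 2) * ∫ q in {q : ℝ × ℝ |
            |q.1 * n1 + q.2 * n2| ≤ 1 / 2 ∧ |(-q.1) * n2 + q.2 * n1| ≤ 1 / 2},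
          (ε⁻¹ * (pz u q - (px u q) ^ 2 / 2) ^ 2 + ε * (px (px u) q) ^ 2) := by
  -- ## Step 0 : n is a unit vector
  have hn : n1 ^ 2 + n2 ^ 2 = 1 := by
    have hm : mp1 ≠ mm1 := by
      intro h; exact hne (by simp [Prod.ext_iff, hparp, hparm, h])
    have hp : p1 ≠ 0 := by rw [hp1]; exact sub_ne_zero.2 hm
    have hpos : 0 < p1 ^ 2 + p2 ^ 2 := by positivity
    have hs : Real.sqrt (p1 ^ 2 + p2 ^ 2) ^ 2 = p1 ^ 2 + p2 ^ 2 := Real.sq_sqrt hpos.le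
    have hsne : Real.sqrt (p1 ^ 2 + p2 ^ 2) ≠ 0 := by positivity
    rw [hn1, hn2]; field_simp; linarith [hs]
  -- ## Step 1 : derivative framework
  have hud : Differentiable ℝ u := hu.differentiable (by norm_num)
  set ux : ℝ × ℝ → ℝ := fun q => fderiv ℝ u q (1, 0) with hux_def
  set uz : ℝ × ℝ → ℝ := fun q => fderiv ℝ u q (0, 1) with huz_def
  have hpx : ∀ q : ℝ × ℝ, px u q = ux q := by
    intro q
    have h1 : HasDerivAt (fun s : ℝ => (s, q.2)) ((1:ℝ), (0:ℝ)) q.1 :=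
      HasDerivAt.prodMk (hasDerivAt_id q.1) (hasDerivAt_const q.1 q.2)
    exact ((hud q).hasFDerivAt.comp_hasDerivAt q.1 h1).deriv
  have hpz : ∀ q : ℝ × ℝ, pz u q = uz q := by
    intro q
    have h1 : HasDerivAt (fun t : ℝ => (q.1, t)) ((0:ℝ), (1:ℝ)) q.2 :=
      HasDerivAt.prodMk (hasDerivAt_const q.2 q.1) (hasDerivAt_id q.2)
    exact ((hud q).hasFDerivAt.comp_hasDerivAt q.2 h1).deriv
  have hD1 : ContDiff ℝ 1 (fderiv ℝ u) := hu.fderiv_right (by norm_num)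
  have hux1 : ContDiff ℝ 1 ux := hD1.clm_apply contDiff_const
  have huz1 : ContDiff ℝ 1 uz := hD1.clm_apply contDiff_const
  have huxd : ∀ q : ℝ × ℝ, HasFDerivAt ux (fderiv ℝ ux q) q :=
    fun q => (hux1.differentiable one_ne_zero q).hasFDerivAt
  have huzd : ∀ q : ℝ × ℝ, HasFDerivAt uz (fderiv ℝ uz q) q :=
    fun q => (huz1.differentiable one_ne_zero q).hasFDerivAt
  have hsymm : ∀ q : ℝ × ℝ, fderiv ℝ ux q (0,1) = fderiv ℝ uz q (1,0) := by
    intro q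
    have h1 : ∀ (v : ℝ × ℝ), fderiv ℝ (fun p => fderiv ℝ u p v) q
        = (ContinuousLinearMap.apply ℝ ℝ v).comp (fderiv ℝ (fderiv ℝ u) q) := by
      intro v
      exact ((ContinuousLinearMap.apply ℝ ℝ v).hasFDerivAt.comp q
        ((hD1.differentiable one_ne_zero q).hasFDerivAt)).fderiv
    have hsym := (hu.contDiffAt (x := q)).isSymmSndFDerivAt (by norm_num)
    have := hsym ((0:ℝ),(1:ℝ)) ((1:ℝ),(0:ℝ))
    simp only [hux_def, huz_def, h1, ContinuousLinearMap.coe_comp', Function.comp_apply,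
      ContinuousLinearMap.apply_apply]
    exact this
  have hpxx : ∀ q : ℝ × ℝ, px (px u) q = fderiv ℝ ux q (1,0) := by
    intro q
    have hfe : px u = ux := funext hpx
    have h1 : HasDerivAt (fun s : ℝ => (s, q.2)) ((1:ℝ), (0:ℝ)) q.1 :=
      HasDerivAt.prodMk (hasDerivAt_id q.1) (hasDerivAt_const q.1 q.2)
    have := ((huxd q).comp_hasDerivAt q.1 h1).deriv
    rw [px, hfe]; exact this
  -- the divergence function
  set W : ℝ × ℝ → ℝ := fun q => fderiv ℝ ux q (1,0) * (uz q - (ux q)^2/2) with hW_def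
  have hWc : Continuous W := by
    have h0 : ContDiff ℝ 0 (fderiv ℝ ux) := hux1.fderiv_right (by norm_num)
    have : Continuous (fun q => fderiv ℝ ux q (1,0)) :=
      (h0.clm_apply contDiff_const).continuous
    exact this.mul ((huz1.continuous).sub ((hux1.continuous.pow 2).div_const 2))
  -- ## Step 2 : P, Q and their derivatives
  set P : ℝ × ℝ → ℝ := fun q => ux q * uz q - (1/6) * (ux q * ux q * ux q) with hP_def
  set Q : ℝ × ℝ → ℝ := fun q => -(1/2) * (ux q * ux q) with hQ_def
  set SP : (ℝ × ℝ) → (ℝ × ℝ) →L[ℝ] ℝ :=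
    fun q => (uz q - (ux q)^2/2) • (fderiv ℝ ux q) + ux q • (fderiv ℝ uz q) with hSP_def
  set SQ : (ℝ × ℝ) → (ℝ × ℝ) →L[ℝ] ℝ := fun q => (-(ux q)) • (fderiv ℝ ux q) with hSQ_def
  have hP : ∀ q : ℝ × ℝ, HasFDerivAt P (SP q) q := by
    intro q
    have h1 := ((huxd q).mul (huzd q)).sub
      ((((huxd q).mul (huxd q)).mul (huxd q)).const_mul (1/6 : ℝ))
    refine h1.congr_fderiv ?_
    ext w <;>
      simp [hSP_def, ContinuousLinearMap.add_apply, ContinuousLinearMap.coe_smul',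
        Pi.smul_apply, smul_eq_mul, ContinuousLinearMap.coe_sub', Pi.sub_apply,
        ContinuousLinearMap.coe_comp', Function.comp_apply] <;> ring
  have hQ : ∀ q : ℝ × ℝ, HasFDerivAt Q (SQ q) q := by
    intro q
    have h1 := ((huxd q).mul (huxd q)).const_mul (-(1/2) : ℝ)
    refine h1.congr_fderiv ?_
    ext w <;>
      simp [hSQ_def, ContinuousLinearMap.coe_smul', Pi.smul_apply, smul_eq_mul,
        ContinuousLinearMap.coe_comp', Function.comp_apply] <;> ring
  -- ## Step 3 : rotation
  set Ac : (ℝ × ℝ) →L[ℝ] (ℝ × ℝ) := LinearMap.toContinuousLinearMap (rotL n1 n2) with hAc_def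
  have hAc : ∀ v : ℝ × ℝ, Ac v = (n1 * v.1 - n2 * v.2, n2 * v.1 + n1 * v.2) := by
    intro v; rfl
  set A : ℝ × ℝ → ℝ × ℝ := fun st => Ac st with hA_def
  have hAnu : ∀ st : ℝ × ℝ, (A st).1 * n1 + (A st).2 * n2 = st.1 := by
    intro st; rw [hA_def]; simp only [hAc]; linear_combination st.1 * hn
  have hAtau : ∀ st : ℝ × ℝ, -(A st).1 * n2 + (A st).2 * n1 = st.2 := by
    intro st; rw [hA_def]; simp only [hAc]; linear_combination st.2 * hn
  -- f, g for the divergence theorem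
  set f : ℝ × ℝ → ℝ := fun st => n1 * P (A st) + n2 * Q (A st) with hf_def
  set g : ℝ × ℝ → ℝ := fun st => -n2 * P (A st) + n1 * Q (A st) with hg_def
  set f' : (ℝ × ℝ) → (ℝ × ℝ) →L[ℝ] ℝ :=
    fun st => n1 • ((SP (A st)).comp Ac) + n2 • ((SQ (A st)).comp Ac) with hf'_def
  set g' : (ℝ × ℝ) → (ℝ × ℝ) →L[ℝ] ℝ :=
    fun st => (-n2) • ((SP (A st)).comp Ac) + n1 • ((SQ (A st)).comp Ac) with hg'_def
  have hAd : ∀ st : ℝ × ℝ, HasFDerivAt A Ac st := fun st => Ac.hasFDerivAt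
  have hf' : ∀ st : ℝ × ℝ, HasFDerivAt f (f' st) st := by
    intro st
    exact (((hP (A st)).comp st (hAd st)).const_mul n1).add
      (((hQ (A st)).comp st (hAd st)).const_mul n2)
  have hg' : ∀ st : ℝ × ℝ, HasFDerivAt g (g' st) st := by
    intro st
    exact (((hP (A st)).comp st (hAd st)).const_mul (-n2)).add
      (((hQ (A st)).comp st (hAd st)).const_mul n1)
  -- linearity helper
  have hlin : ∀ (L : (ℝ × ℝ) →L[ℝ] ℝ) (a b : ℝ), L (a, b) = a * L (1,0) + b * L (0,1) := by
    intro L a b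
    have hv : ((a, b) : ℝ × ℝ) = a • ((1:ℝ),(0:ℝ)) + b • ((0:ℝ),(1:ℝ)) := by
      simp [Prod.ext_iff]
    rw [hv, map_add, _root_.map_smul, _root_.map_smul]; simp [smul_eq_mul]
  -- ## Step 4 : divergence identity
  have hdiv : ∀ st : ℝ × ℝ, f' st (1,0) + g' st (0,1) = W (A st) := by
    intro st
    set q := A st with hq
    have e1 : Ac ((1:ℝ),(0:ℝ)) = (n1, n2) := by rw [hAc]; simp
    have e2 : Ac ((0:ℝ),(1:ℝ)) = (-n2, n1) := by rw [hAc]; simp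
    have hs := hsymm q
    simp only [hf'_def, hg'_def, ContinuousLinearMap.add_apply, ContinuousLinearMap.coe_smul',
      Pi.smul_apply, ContinuousLinearMap.coe_comp', Function.comp_apply, smul_eq_mul, e1, e2,
      hSP_def, hSQ_def, ContinuousLinearMap.coe_sub', Pi.sub_apply]
    rw [← hq]
    simp only [ContinuousLinearMap.add_apply, ContinuousLinearMap.coe_smul', Pi.smul_apply,
      smul_eq_mul, hlin (fderiv ℝ ux q) n1 n2, hlin (fderiv ℝ uz q) n1 n2,
      hlin (fderiv ℝ ux q) (-n2) n1, hlin (fderiv ℝ uz q) (-n2) n1, hW_def]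
    rw [← hs]
    linear_combination ((fderiv ℝ ux q) (1,0) * (uz q - (ux q)^2/2)) * hn
  -- ## Step 5 : continuity facts
  have hAcont : Continuous A := by rw [hA_def]; exact Ac.continuous
  have hPc : Continuous P := by
    rw [hP_def]
    exact (hux1.continuous.mul huz1.continuous).sub
      (continuous_const.mul ((hux1.continuous.mul hux1.continuous).mul hux1.continuous))
  have hQc : Continuous Q := by
    rw [hQ_def]
    exact continuous_const.mul (hux1.continuous.mul hux1.continuous)
  have hfc : Continuous f := by
    rw [hf_def]
    exact (continuous_const.mul (hPc.comp hAcont)).add (continuous_const.mul (hQc.comp hAcont))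
  have hgc : Continuous g := by
    rw [hg_def]
    exact (continuous_const.mul (hPc.comp hAcont)).add (continuous_const.mul (hQc.comp hAcont))
  have hWA : Continuous (fun p : ℝ × ℝ => W (A p)) := hWc.comp hAcont
  have hdivfun : (fun x : ℝ × ℝ => f' x (1,0) + g' x (0,1)) = fun x => W (A x) := funext hdiv
  -- ## Step 6 : Green's theorem
  have hgreen := integral2_divergence_prod_of_hasFDerivAt_off_countable f g f' g'
    (-(1/2) : ℝ) (-(1/2) : ℝ) (1/2 : ℝ) (1/2 : ℝ) ∅ Set.countable_empty
    (hfc.continuousOn) (hgc.continuousOn)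
    (fun x _ => hf' x) (fun x _ => hg' x)
    (by
      rw [hdivfun]
      exact hWA.continuousOn.integrableOn_compact (isCompact_uIcc.prod isCompact_uIcc))
  -- boundary terms
  have hgtop : ∀ x : ℝ, g (x, (1/2 : ℝ)) = g (x, -(1/2 : ℝ)) := by
    intro x
    set q0 : ℝ × ℝ := A (x, -(1/2 : ℝ)) with hq0
    have hshift : A (x, (1/2 : ℝ)) = (q0.1 - n2, q0.2 + n1) := by
      rw [hq0, hA_def]; simp only [hAc, Prod.mk.injEq]; constructor <;> ring
    have hx : ux (A (x, (1/2 : ℝ))) = ux q0 := by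
      rw [← hpx, ← hpx, hshift]; exact (hper q0).1
    have hz : uz (A (x, (1/2 : ℝ))) = uz q0 := by
      rw [← hpz, ← hpz, hshift]; exact (hper q0).2
    rw [hg_def]; simp only [hP_def, hQ_def, hx, hz]
    rw [← hq0]
  have hfright : ∀ y : ℝ, f ((1/2 : ℝ), y)
      = n1 * (mp1 * mp2 - mp1 ^ 3 / 6) + n2 * (-(mp1 ^ 2) / 2) := by
    intro y
    have hb := hbcp (A ((1/2 : ℝ), y)) (hAnu ((1/2 : ℝ), y))
    have hx : ux (A ((1/2 : ℝ), y)) = mp1 := by rw [← hpx]; exact hb.1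
    have hz : uz (A ((1/2 : ℝ), y)) = mp2 := by rw [← hpz]; exact hb.2
    rw [hf_def]; simp only [hP_def, hQ_def, hx, hz]; ring
  have hfleft : ∀ y : ℝ, f (-(1/2 : ℝ), y)
      = n1 * (mm1 * mm2 - mm1 ^ 3 / 6) + n2 * (-(mm1 ^ 2) / 2) := by
    intro y
    have hb := hbcm (A (-(1/2 : ℝ), y)) (hAnu (-(1/2 : ℝ), y))
    have hx : ux (A (-(1/2 : ℝ), y)) = mm1 := by rw [← hpx]; exact hb.1
    have hz : uz (A (-(1/2 : ℝ), y)) = mm2 := by rw [← hpz]; exact hb.2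
    rw [hf_def]; simp only [hP_def, hQ_def, hx, hz]; ring
  set cP : ℝ := n1 * (mp1 * mp2 - mp1 ^ 3 / 6) + n2 * (-(mp1 ^ 2) / 2) with hcP
  set cM : ℝ := n1 * (mm1 * mm2 - mm1 ^ 3 / 6) + n2 * (-(mm1 ^ 2) / 2) with hcM
  have hgreen2 : (∫ x in (-(1/2) : ℝ)..(1/2 : ℝ), ∫ y in (-(1/2) : ℝ)..(1/2 : ℝ),
      W (A (x, y))) = cP - cM := by
    have e0 : (∫ x in (-(1/2) : ℝ)..(1/2 : ℝ), ∫ y in (-(1/2) : ℝ)..(1/2 : ℝ), W (A (x, y)))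
        = ∫ x in (-(1/2) : ℝ)..(1/2 : ℝ), ∫ y in (-(1/2) : ℝ)..(1/2 : ℝ),
          (f' (x, y) (1,0) + g' (x, y) (0,1)) := by
      simp only [hdiv]
    have e1 : (∫ x in (-(1/2) : ℝ)..(1/2 : ℝ), g (x, (1/2 : ℝ)))
        = ∫ x in (-(1/2) : ℝ)..(1/2 : ℝ), g (x, -(1/2 : ℝ)) := by
      simp only [hgtop]
    have e2 : (∫ y in (-(1/2) : ℝ)..(1/2 : ℝ), f ((1/2 : ℝ), y)) = cP := by
      simp only [hfright]
      rw [intervalIntegral.integral_const]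
      simp; ring
    have e3 : (∫ y in (-(1/2) : ℝ)..(1/2 : ℝ), f (-(1/2 : ℝ), y)) = cM := by
      simp only [hfleft]
      rw [intervalIntegral.integral_const]
      simp; ring
    rw [e0, hgreen, e1, e2, e3]; ring
  -- ## Step 7 : change of variables
  set Sq : Set (ℝ × ℝ) := Set.Icc (-(1/2) : ℝ) (1/2 : ℝ) ×ˢ Set.Icc (-(1/2) : ℝ) (1/2 : ℝ)
    with hSq
  set S : Set (ℝ × ℝ) := {q : ℝ × ℝ |
      |q.1 * n1 + q.2 * n2| ≤ 1 / 2 ∧ |(-q.1) * n2 + q.2 * n1| ≤ 1 / 2} with hS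
  have hpre : A ⁻¹' S = Sq := by
    ext p
    simp only [hS, Set.mem_preimage, Set.mem_setOf_eq, hSq, Set.mem_prod, Set.mem_Icc]
    rw [hAnu p]
    rw [show (-(A p).1) * n2 + (A p).2 * n1 = p.2 from hAtau p]
    constructor
    · rintro ⟨h1, h2⟩; exact ⟨abs_le.mp h1, abs_le.mp h2⟩
    · rintro ⟨h1, h2⟩; exact ⟨abs_le.mpr h1, abs_le.mpr h2⟩
  have hAfun : A = ⇑(rotL n1 n2) := rfl
  have hsurj : Function.Surjective A := by
    intro q
    exact ⟨(rotE n1 n2 hn).symm q, (rotE n1 n2 hn).apply_symm_apply q⟩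
  have hS_img : S = A '' Sq := by
    rw [← hpre, Set.image_preimage_eq _ hsurj]
  have hScompact : IsCompact S := by
    rw [hS_img]; exact ((isCompact_Icc.prod isCompact_Icc).image hAcont)
  have hSmeas : MeasurableSet S := hScompact.isClosed.measurableSet
  have hchange : ∫ q in S, W q = ∫ p in Sq, W (A p) := by
    rw [← hpre, hAfun]
    exact ((rotL_mp n1 n2 hn).setIntegral_preimage_emb (rotL_emb n1 n2 hn) W S).symm
  have hsq_int : IntegrableOn (fun p => W (A p)) Sq :=
    hWA.continuousOn.integrableOn_compact (isCompact_Icc.prod isCompact_Icc)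
  have hIcc : ∀ F : ℝ → ℝ, (∫ x in (-(1/2) : ℝ)..(1/2 : ℝ), F x)
      = ∫ x in Set.Icc (-(1/2) : ℝ) (1/2 : ℝ), F x := by
    intro F
    rw [intervalIntegral.integral_of_le (by norm_num : (-(1/2) : ℝ) ≤ 1/2),
      setIntegral_congr_set Ioc_ae_eq_Icc]
  have hiter : (∫ x in (-(1/2) : ℝ)..(1/2 : ℝ), ∫ y in (-(1/2) : ℝ)..(1/2 : ℝ),
      W (A (x, y))) = ∫ p in Sq, W (A p) := by
    rw [hIcc (fun x => ∫ y in (-(1/2) : ℝ)..(1/2 : ℝ), W (A (x, y)))]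
    have hin : ∀ x : ℝ, (∫ y in (-(1/2) : ℝ)..(1/2 : ℝ), W (A (x, y)))
        = ∫ y in Set.Icc (-(1/2) : ℝ) (1/2 : ℝ), W (A (x, y)) := fun x => hIcc _
    simp only [hin]
    rw [hSq, MeasureTheory.Measure.volume_eq_prod] at hsq_int ⊢
    exact (setIntegral_prod _ hsq_int).symm
  -- ## Step 8 : final comparison
  have hSW : |∫ q in S, W q| = |cP - cM| := by
    rw [hchange, ← hiter, hgreen2]
  have hk11c : Continuous (fun q : ℝ × ℝ => fderiv ℝ ux q (1, 0)) := by
    have h0 : ContDiff ℝ 0 (fderiv ℝ ux) := hux1.fderiv_right (by norm_num)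
    exact (h0.clm_apply contDiff_const).continuous
  set H : ℝ × ℝ → ℝ := fun q =>
    ε⁻¹ * (uz q - (ux q) ^ 2 / 2) ^ 2 + ε * (fderiv ℝ ux q (1, 0)) ^ 2 with hH
  have hHc : Continuous H := by
    rw [hH]
    exact (continuous_const.mul
        (((huz1.continuous.sub ((hux1.continuous.pow 2).div_const 2))).pow 2)).add
      (continuous_const.mul (hk11c.pow 2))
  have hintabsW : IntegrableOn (fun q => |W q|) S :=
    hWc.abs.continuousOn.integrableOn_compact hScompact
  have hintH : IntegrableOn (fun q => (1/2) * H q) S :=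
    (hHc.const_smul (1/2 : ℝ)).continuousOn.integrableOn_compact hScompact
  have hpoint : ∀ q ∈ S, |W q| ≤ (1/2) * H q := by
    intro q _
    rw [hW_def, hH]
    exact half_bound ε (uz q - (ux q) ^ 2 / 2) (fderiv ℝ ux q (1, 0)) hε
  have habs : |∫ q in S, W q| ≤ ∫ q in S, |W q| := by
    have := norm_integral_le_integral_norm (μ := volume.restrict S) W
    simpa [Real.norm_eq_abs] using this
  have hmono : (∫ q in S, |W q|) ≤ ∫ q in S, (1/2) * H q :=
    setIntegral_mono_on hintabsW hintH hSmeas hpoint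
  have hhalf : (∫ q in S, (1/2) * H q) = (1/2) * ∫ q in S, H q :=
    integral_const_mul (1/2 : ℝ) H
  have hgoalL : |((mp1 * mp2 - mp1 ^ 3 / 6) - (mm1 * mm2 - mm1 ^ 3 / 6)) * n1
      + ((-(mp1 ^ 2) / 2) - (-(mm1 ^ 2) / 2)) * n2| = |cP - cM| := by
    rw [hcP, hcM]; ring_nf
  have hgoalR : (∫ q in S,
        (ε⁻¹ * (pz u q - (px u q) ^ 2 / 2) ^ 2 + ε * (px (px u) q) ^ 2))
      = ∫ q in S, H q := by
    congr 1
    funext q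
    rw [hH, hpx, hpz, hpxx]
  calc |((mp1 * mp2 - mp1 ^ 3 / 6) - (mm1 * mm2 - mm1 ^ 3 / 6)) * n1
      + ((-(mp1 ^ 2) / 2) - (-(mm1 ^ 2) / 2)) * n2| = |cP - cM| := hgoalL
    _ = |∫ q in S, W q| := hSW.symm
    _ ≤ ∫ q in S, |W q| := habs
    _ ≤ ∫ q in S, (1/2) * H q := hmono
    _ = (1/2) * ∫ q in S, H q := hhalf
    _ = (1/2) * ∫ q in S,
        (ε⁻¹ * (pz u q - (px u q) ^ 2 / 2) ^ 2 + ε * (px (px u) q) ^ 2) := by rw [hgoalR]
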